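/- The map h: (ℝ², 0) → (ℝ², 0) defined in polar coordinates by (r, θ) ↦ (r, θ − log r) (and h(0) = 0) is a bi-Lipschitz homeomorphism germ at the origin; in particular, it maps the semi-line θ = 0 onto a logarithmic spiral. -/

import Mathlib

open Filter MeasureTheory Topology

/-- `ℂⁿ` modelled as functions `Fin n → ℂ`. -/
abbrev En (n : ℕ) := Fin n → ℂ

/-- `a ≲ b` near `0` : there is `C > 0` with `a x ≤ C * b x` on a neighbourhood of `0`. -/
def EvDom {E : Type*} [NormedAddCommGroup E] (a b : E → ℝ) : Prop :=
  ∃ C : ℝ, 0 < C ∧ ∀ᶠ x in 𝓝 (0 : E), a x ≤ C * b x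

/-- The pair `(φ, ψ)` is a germ at `0` of a bi-Lipschitz homeomorphism `(E,0) → (F,0)`,
with `ψ` the inverse of `φ`. -/
def BiLipGerm {E F : Type*} [NormedAddCommGroup E] [NormedAddCommGroup F]
    (φ : E → F) (ψ : F → E) : Prop :=
  φ 0 = 0 ∧ ψ 0 = 0 ∧
  (∃ U ∈ 𝓝 (0 : E), ∃ K : NNReal, LipschitzOnWith K φ U) ∧
  (∃ V ∈ 𝓝 (0 : F), ∃ K : NNReal, LipschitzOnWith K ψ V) ∧
  (∀ᶠ x in 𝓝 (0 : E), ψ (φ x) = x) ∧ (∀ᶠ y in 𝓝 (0 : F), φ (ψ y) = y)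

/-- `f : (ℂⁿ,0) → (ℂ,0)` is a holomorphic germ with an isolated singularity at the origin. -/
def IsolatedSing {n : ℕ} (f : En n → ℂ) : Prop :=
  AnalyticAt ℂ f 0 ∧ f 0 = 0 ∧ fderiv ℂ f 0 = 0 ∧
    ∀ᶠ x in 𝓝[≠] (0 : En n), fderiv ℂ f x ≠ 0

/-- The Łojasiewicz exponent `𝓛₀(∇f)` of the gradient map of `f`. -/
noncomputable def LojGrad {n : ℕ} (f : En n → ℂ) : ℝ :=
  sInf {α : ℝ | 0 ≤ α ∧ ∃ C : ℝ, 0 < C ∧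
    ∀ᶠ x in 𝓝 (0 : En n), ‖x‖ ^ α ≤ C * ‖fderiv ℂ f x‖}

lemma exp_I_sub_one_le (θ : ℝ) : ‖Complex.exp (θ * Complex.I) - 1‖ ≤ |θ| := by
  have h1 : ‖Complex.exp (θ * Complex.I) - 1‖ ^ 2 = 2 - 2 * Real.cos θ := by
    rw [Complex.sq_norm, Complex.normSq_apply]
    simp [Complex.exp_ofReal_mul_I_re, Complex.exp_ofReal_mul_I_im]
    nlinarith [Real.sin_sq_add_cos_sq θ]
  have h2 : Real.cos θ = 1 - 2 * Real.sin (θ/2) ^ 2 := by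
    have := Real.cos_sq (θ/2)
    rw [show 2*(θ/2) = θ by ring] at this; nlinarith [Real.sin_sq_add_cos_sq (θ/2)]
  have h3 : Real.sin (θ/2) ^ 2 ≤ (θ/2) ^ 2 := Real.sin_sq_le_sq
  have h4 := norm_nonneg (Complex.exp (θ * Complex.I) - 1)
  nlinarith [_root_.sq_abs θ, abs_nonneg θ]

noncomputable def spiralMap (c : ℝ) (z : ℂ) : ℂ :=
  if z = 0 then 0 else z * Complex.exp ((c * Real.log (‖z‖) : ℝ) * Complex.I)

lemma spiralMap_abs (c : ℝ) (z : ℂ) : ‖spiralMap c z‖ = ‖z‖ := by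
  unfold spiralMap; split
  · simp [*]
  · rw [norm_mul, Complex.norm_exp_ofReal_mul_I, mul_one]

lemma spiralMap_zero_left (z : ℂ) : spiralMap 0 z = z := by
  unfold spiralMap; split <;> simp [*]

lemma spiralMap_comp (c d : ℝ) (z : ℂ) :
    spiralMap c (spiralMap d z) = spiralMap (c + d) z := by
  rcases eq_or_ne z 0 with rfl | hz
  · simp [spiralMap]
  have hdz : spiralMap d z ≠ 0 := by
    intro h0
    apply hz
    have := spiralMap_abs d z
    rw [h0] at this; simpa using this.symm
  rw [show spiralMap c (spiralMap d z) =
      spiralMap d z * Complex.exp ((c * Real.log (‖spiralMap d z‖) : ℝ) * Complex.I)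
    from if_neg hdz, spiralMap_abs, show spiralMap d z =
      z * Complex.exp ((d * Real.log (‖z‖) : ℝ) * Complex.I) from if_neg hz,
    show spiralMap (c + d) z =
      z * Complex.exp (((c + d) * Real.log (‖z‖) : ℝ) * Complex.I) from if_neg hz,
    mul_assoc, ← Complex.exp_add]
  congr 2
  push_cast
  ring

lemma spiral_est (c : ℝ) (z w : ℂ) (hw : ‖w‖ ≤ ‖z‖) :
    ‖spiralMap c z - spiralMap c w‖ ≤ (1 + |c|) * ‖z - w‖ := by
  have hc : (0:ℝ) ≤ |c| := abs_nonneg c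
  rcases eq_or_ne w 0 with rfl | hw0
  · rw [show spiralMap c 0 = 0 from if_pos rfl, sub_zero, sub_zero]
    have := spiralMap_abs c z
    nlinarith [norm_nonneg z]
  have hwpos : 0 < ‖w‖ := by simpa [norm_pos_iff] using hw0
  have hzpos : 0 < ‖z‖ := lt_of_lt_of_le hwpos hw
  have hz0 : z ≠ 0 := by simpa [norm_pos_iff] using hzpos
  set a := Real.log (‖z‖) with ha
  set b := Real.log (‖w‖) with hb
  have hab : b ≤ a := Real.log_le_log hwpos hw
  -- log difference bound
  have hlog : ‖w‖ * (a - b) ≤ ‖z‖ - ‖w‖ := by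
    have h1 : a - b = Real.log (‖z‖ / ‖w‖) := by
      rw [Real.log_div (ne_of_gt hzpos) (ne_of_gt hwpos)]
    have h2 : Real.log (‖z‖ / ‖w‖) ≤ ‖z‖ / ‖w‖ - 1 :=
      Real.log_le_sub_one_of_pos (div_pos hzpos hwpos)
    rw [h1]
    have := mul_le_mul_of_nonneg_left h2 hwpos.le
    calc ‖w‖ * Real.log (‖z‖ / ‖w‖)
        ≤ ‖w‖ * (‖z‖ / ‖w‖ - 1) := this
      _ = ‖z‖ - ‖w‖ := by field_simp
  have habs : ‖z‖ - ‖w‖ ≤ ‖z - w‖ := by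
    have := norm_sub_norm_le z w
    simpa using this
  -- decomposition
  have hdecomp : spiralMap c z - spiralMap c w =
      (z - w) * Complex.exp ((c * a : ℝ) * Complex.I) +
        w * (Complex.exp ((c * b : ℝ) * Complex.I) *
          (Complex.exp ((c * (a - b) : ℝ) * Complex.I) - 1)) := by
    rw [show spiralMap c z = z * Complex.exp ((c * a : ℝ) * Complex.I) from if_neg hz0,
      show spiralMap c w = w * Complex.exp ((c * b : ℝ) * Complex.I) from if_neg hw0]
    rw [show ((c * a : ℝ) : ℂ) * Complex.I =
      (c * b : ℝ) * Complex.I + (c * (a - b) : ℝ) * Complex.I by push_cast; ring,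
      Complex.exp_add]
    ring
  rw [hdecomp]
  calc ‖(z - w) * Complex.exp ((c * a : ℝ) * Complex.I) +
        w * (Complex.exp ((c * b : ℝ) * Complex.I) *
          (Complex.exp ((c * (a - b) : ℝ) * Complex.I) - 1))‖
      ≤ ‖(z - w) * Complex.exp ((c * a : ℝ) * Complex.I)‖ +
        ‖w * (Complex.exp ((c * b : ℝ) * Complex.I) *
          (Complex.exp ((c * (a - b) : ℝ) * Complex.I) - 1))‖ := norm_add_le _ _
    _ = ‖z - w‖ + ‖w‖ *
          ‖Complex.exp ((c * (a - b) : ℝ) * Complex.I) - 1‖ := by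
        rw [norm_mul, norm_mul, norm_mul, Complex.norm_exp_ofReal_mul_I,
          Complex.norm_exp_ofReal_mul_I, mul_one, one_mul]
    _ ≤ ‖z - w‖ + ‖w‖ * |c * (a - b)| := by
        have := exp_I_sub_one_le (c * (a - b))
        nlinarith [norm_nonneg w]
    _ ≤ ‖z - w‖ + |c| * ‖z - w‖ := by
        rw [abs_mul, abs_of_nonneg (by linarith : (0:ℝ) ≤ a - b)]
        have h5 : ‖w‖ * (|c| * (a - b)) ≤ |c| * ‖z - w‖ := by
          have h6 : ‖w‖ * (a - b) ≤ ‖z - w‖ := le_trans hlog habs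
          calc ‖w‖ * (|c| * (a - b)) = |c| * (‖w‖ * (a - b)) := by ring
            _ ≤ |c| * ‖z - w‖ := mul_le_mul_of_nonneg_left h6 hc
        linarith
    _ = (1 + |c|) * ‖z - w‖ := by ring

lemma spiral_lipschitz (c : ℝ) : LipschitzWith ⟨1 + |c|, by positivity⟩ (spiralMap c) := by
  apply LipschitzWith.of_dist_le_mul
  intro x y
  rw [Complex.dist_eq, Complex.dist_eq]
  show ‖spiralMap c x - spiralMap c y‖ ≤ (1 + |c|) * ‖x - y‖
  rcases le_total (‖y‖) (‖x‖) with hle | hle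
  · exact spiral_est c x y hle
  · have := spiral_est c y x hle
    rwa [← norm_neg, neg_sub, ← norm_neg (y - x), neg_sub] at this

/-- **The logarithmic spiral map is a bi-Lipschitz homeomorphism germ.**
The map `h : (ℝ²,0) → (ℝ²,0)` given in polar coordinates by `(r,θ) ↦ (r, θ - log r)`
(identifying `ℝ² = ℂ`, `h z = z·exp(-i·log|z|)` for `z ≠ 0`, `h 0 = 0`) is a bi-Lipschitz
homeomorphism germ at the origin; in particular it sends the semi-line `θ = 0` to the
logarithmic spiral `r ↦ r·exp(-i·log r)`. -/
theorem logSpiral_biLipschitz (h : ℂ → ℂ)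
    (hh : ∀ z : ℂ, h z =
      if z = 0 then 0 else z * Complex.exp (-(Real.log (‖z‖)) * Complex.I)) :
    (∃ ψ : ℂ → ℂ, BiLipGerm h ψ) ∧
      ∀ r : ℝ, 0 < r → h r = r * Complex.exp (-(Real.log r) * Complex.I) := by
  have hfun : h = spiralMap (-1) := by
    funext z
    rw [hh]
    unfold spiralMap
    split
    · rfl
    · congr 2; push_cast; ring
  constructor
  · refine ⟨spiralMap 1, ?_, ?_, ?_, ?_, ?_, ?_⟩
    · rw [hfun]; exact if_pos rfl
    · exact if_pos rfl
    · exact ⟨Set.univ, Filter.univ_mem, _, by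
        rw [hfun]; exact (spiral_lipschitz (-1)).lipschitzOnWith⟩
    · exact ⟨Set.univ, Filter.univ_mem, _, (spiral_lipschitz 1).lipschitzOnWith⟩
    · refine Filter.Eventually.of_forall fun x => ?_
      rw [hfun, spiralMap_comp]
      norm_num [spiralMap_zero_left]
    · refine Filter.Eventually.of_forall fun y => ?_
      rw [hfun, spiralMap_comp]
      norm_num [spiralMap_zero_left]
  · intro r hr
    rw [hh, if_neg (by exact_mod_cast ne_of_gt hr), Complex.norm_real, Real.norm_eq_abs, abs_of_pos hr]
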